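/- arXiv:1309.5423 — 3 statements merged into one kernel-verified Lean document; each statement's English description precedes it below -/
import Mathlib

section
/- Let n ≥ 1, let a : Fin n → ℤ be monotone nondecreasing, and let σ be a permutation of Fin n. Then ∑_{i=0}^{n−2} |a(σ(i+1)) − a(σ(i))| = a(n−1) − a(0) holds if and only if either a(σ(i)) = a(i) for all i, or a(σ(i)) = a(n−1−i) for all i. (This is the equality case of Lemma: equality of total lengths holds exactly when σ[b] ∈ {[b], [b]*}, where [b]* = [−b_{n−2},…,−b_0] is the class of the reversed sequence.) -/
private lemma tv_segment (g : ℕ → ℤ) : ∀ {i j : ℕ}, i ≤ j →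
    |g j - g i| ≤ ∑ k ∈ Finset.Ico i j, |g (k + 1) - g k| := by
  intro i j h
  induction j, h using Nat.le_induction with
  | base => simp
  | succ j hij ih =>
    rw [Finset.sum_Ico_succ_top (by omega)]
    have h1 : |g (j + 1) - g i| ≤ |g (j + 1) - g j| + |g j - g i| := abs_sub_le _ _ _
    linarith

private lemma three_point (g : ℕ → ℤ) {i j m : ℕ} (hij : i ≤ j) (hjm : j ≤ m) :
    |g i - g 0| + |g j - g i| + |g m - g j| ≤ ∑ k ∈ Finset.range m, |g (k + 1) - g k| := by
  rw [Finset.range_eq_Ico]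
  have h1 := Finset.sum_Ico_consecutive (fun k => |g (k + 1) - g k|) (Nat.zero_le j) hjm
  have h2 := Finset.sum_Ico_consecutive (fun k => |g (k + 1) - g k|) (Nat.zero_le i) hij
  have t1 := tv_segment g (Nat.zero_le i)
  have t2 := tv_segment g hij
  have t3 := tv_segment g hjm
  linarith

private lemma exists_ge (n : ℕ) (σ : Equiv.Perm (Fin n)) (i : Fin n) :
    ∃ k, k ≤ i ∧ i ≤ σ k := by
  by_contra h
  push_neg at h
  have hsub : (Finset.Iic i).image σ ⊆ Finset.Iio i := by
    intro x hx
    simp only [Finset.mem_image, Finset.mem_Iic, Finset.mem_Iio] at hx ⊢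
    obtain ⟨k, hk, rfl⟩ := hx
    exact h k hk
  have h1 : (Finset.Iic i).card ≤ (Finset.Iio i).card := by
    rw [← Finset.card_image_of_injective _ σ.injective]
    exact Finset.card_le_card hsub
  rw [Fin.card_Iic, Fin.card_Iio] at h1
  omega

private lemma exists_le (n : ℕ) (σ : Equiv.Perm (Fin n)) (i : Fin n) :
    ∃ k, i ≤ k ∧ σ k ≤ i := by
  by_contra h
  push_neg at h
  have hsub : (Finset.Ici i).image σ ⊆ Finset.Ioi i := by
    intro x hx
    simp only [Finset.mem_image, Finset.mem_Ici, Finset.mem_Ioi] at hx ⊢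
    obtain ⟨k, hk, rfl⟩ := hx
    exact h k hk
  have h1 : (Finset.Ici i).card ≤ (Finset.Ioi i).card := by
    rw [← Finset.card_image_of_injective _ σ.injective]
    exact Finset.card_le_card hsub
  rw [Fin.card_Ici, Fin.card_Ioi] at h1
  have := i.2
  omega

private lemma mono_rearrange {n : ℕ} (a : Fin n → ℤ) (ha : Monotone a)
    (σ : Equiv.Perm (Fin n)) (hc : Monotone (a ∘ σ)) : ∀ i, a (σ i) = a i := by
  intro i
  obtain ⟨k, hk, hk2⟩ := exists_ge n σ i
  obtain ⟨l, hl, hl2⟩ := exists_le n σ i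
  exact le_antisymm (le_trans (hc hl) (ha hl2)) (le_trans (ha hk2) (hc hk))

set_option maxHeartbeats 1000000 in
/-- For a monotone nondecreasing `a : Fin n → ℤ` (n ≥ 1) and a permutation σ of
`Fin n`, the total variation of `a ∘ σ` equals `a (n-1) - a 0` if and only if `a ∘ σ` = a` or
`a ∘ σ` is the reversal of `a`. (Equality case of Lemma: σ[b] ∈ {[b], [b]*}.) -/
theorem stmt3 (n : ℕ) (hn : 1 ≤ n) (a : Fin n → ℤ) (ha : Monotone a)
    (σ : Equiv.Perm (Fin n)) :
    (∑ i : Fin (n - 1),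
        |a (σ ⟨i.1 + 1, by have := i.2; omega⟩) - a (σ ⟨i.1, by have := i.2; omega⟩)|
      = a ⟨n - 1, by omega⟩ - a ⟨0, by omega⟩) ↔
    ((∀ i : Fin n, a (σ i) = a i) ∨
      (∀ i : Fin n, a (σ i) = a ⟨n - 1 - i.1, by omega⟩)) := by
  -- helper for Fin.mk equalities
  have amk : ∀ (x y : ℕ) (hx : x < n) (hy : y < n), x = y → a (σ ⟨x, hx⟩) = a (σ ⟨y, hy⟩) := by
    intro x y hx hy h; subst h; rfl
  have amk' : ∀ (x y : ℕ) (hx : x < n) (hy : y < n), x = y → a ⟨x, hx⟩ = a ⟨y, hy⟩ := by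
    intro x y hx hy h; subst h; rfl
  obtain ⟨A, hA⟩ : ∃ A, A = a ⟨n - 1, by omega⟩ := ⟨_, rfl⟩
  obtain ⟨B, hB⟩ : ∃ B, B = a ⟨0, by omega⟩ := ⟨_, rfl⟩
  obtain ⟨g, hgdef⟩ : ∃ g : ℕ → ℤ, g = fun k => a (σ ⟨min k (n - 1), by omega⟩) := ⟨_, rfl⟩
  have hg : ∀ i : Fin n, g i.1 = a (σ i) := by
    intro i
    rw [hgdef]
    exact amk (min i.1 (n - 1)) i.1 (by omega) i.2 (by omega)
  have hsum : (∑ i : Fin (n - 1),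
        |a (σ ⟨i.1 + 1, by have := i.2; omega⟩) - a (σ ⟨i.1, by have := i.2; omega⟩)|)
      = ∑ k ∈ Finset.range (n - 1), |g (k + 1) - g k| := by
    have step1 : (∑ i : Fin (n - 1),
        |a (σ ⟨i.1 + 1, by have := i.2; omega⟩) - a (σ ⟨i.1, by have := i.2; omega⟩)|)
        = ∑ i : Fin (n - 1), (fun k => |g (k + 1) - g k|) i.1 := by
      apply Finset.sum_congr rfl
      intro i _
      have hi := i.2
      have e1 : g (i.1 + 1) = a (σ ⟨i.1 + 1, by omega⟩) := by
        rw [hgdef]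
        exact amk (min (i.1 + 1) (n - 1)) (i.1 + 1) (by omega) (by omega) (by omega)
      have e2 : g i.1 = a (σ ⟨i.1, by omega⟩) := by
        rw [hgdef]
        exact amk (min i.1 (n - 1)) i.1 (by omega) (by omega) (by omega)
      show _ = |g (i.1 + 1) - g i.1|
      rw [e1, e2]
    exact step1.trans (Fin.sum_univ_eq_sum_range (fun k => |g (k + 1) - g k|) (n - 1))
  have h0 : ∀ x : Fin n, (⟨0, by omega⟩ : Fin n) ≤ x := by
    intro x; rw [Fin.le_def]; exact Nat.zero_le _
  have hle : ∀ x : Fin n, x ≤ (⟨n - 1, by omega⟩ : Fin n) := by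
    intro x; rw [Fin.le_def]; have := x.2; dsimp; omega
  have hbound : ∀ k : ℕ, B ≤ g k ∧ g k ≤ A := by
    intro k
    rw [hA, hB, hgdef]
    exact ⟨ha (h0 _), ha (hle _)⟩
  have hAB : B ≤ A := by rw [hA, hB]; exact ha (h0 _)
  rw [hsum, ← hA, ← hB]
  constructor
  · intro h
    obtain ⟨p, hp⟩ : ∃ p, p = σ⁻¹ ⟨n - 1, by omega⟩ := ⟨_, rfl⟩
    obtain ⟨q, hq⟩ : ∃ q, q = σ⁻¹ ⟨0, by omega⟩ := ⟨_, rfl⟩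
    have hgp : g p.1 = A := by
      rw [hg p, hp, ← Equiv.Perm.mul_apply, mul_inv_cancel, Equiv.Perm.one_apply, hA]
    have hgq : g q.1 = B := by
      rw [hg q, hq, ← Equiv.Perm.mul_apply, mul_inv_cancel, Equiv.Perm.one_apply, hB]
    rcases le_total q.1 p.1 with hqp | hpq
    · -- monotone case
      have hends : g 0 = B ∧ g (n - 1) = A := by
        have h3 := three_point g hqp (show p.1 ≤ n - 1 by have := p.2; omega)
        rw [h, hgp, hgq] at h3
        have e1 : |A - B| = A - B := abs_of_nonneg (by linarith)
        have e2 := abs_nonneg (B - g 0)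
        have e3 := abs_nonneg (g (n - 1) - A)
        have e4 : |B - g 0| = 0 := by linarith
        have e5 : |g (n - 1) - A| = 0 := by linarith
        rw [abs_eq_zero, sub_eq_zero] at e4 e5
        exact ⟨e4.symm, e5⟩
      have hmono : Monotone (a ∘ σ) := by
        intro i j hij
        have h3 := three_point g (show i.1 ≤ j.1 from hij) (show j.1 ≤ n - 1 by have := j.2; omega)
        rw [h, hends.1, hends.2] at h3
        have bi := hbound i.1
        have bj := hbound j.1
        have e1 : |g i.1 - B| = g i.1 - B := abs_of_nonneg (by linarith [bi.1])
        have e2 : |A - g j.1| = A - g j.1 := abs_of_nonneg (by linarith [bj.2])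
        have e3 : g i.1 - g j.1 ≤ |g j.1 - g i.1| := by
          rw [abs_sub_comm]; exact le_abs_self _
        have : g i.1 ≤ g j.1 := by linarith
        show a (σ i) ≤ a (σ j)
        rw [← hg i, ← hg j]
        exact this
      exact Or.inl (mono_rearrange a ha σ hmono)
    · -- antitone case
      have hends : g 0 = A ∧ g (n - 1) = B := by
        have h3 := three_point g hpq (show q.1 ≤ n - 1 by have := q.2; omega)
        rw [h, hgp, hgq] at h3
        have e1 : |B - A| = A - B := by rw [abs_sub_comm]; exact abs_of_nonneg (by linarith)
        have e2 := abs_nonneg (A - g 0)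
        have e3 := abs_nonneg (g (n - 1) - B)
        have e4 : |A - g 0| = 0 := by linarith
        have e5 : |g (n - 1) - B| = 0 := by linarith
        rw [abs_eq_zero, sub_eq_zero] at e4 e5
        exact ⟨e4.symm, e5⟩
      have hanti : ∀ u v : Fin n, u.1 ≤ v.1 → a (σ v) ≤ a (σ u) := by
        intro u v huv
        have h3 := three_point g huv (show v.1 ≤ n - 1 by have := v.2; omega)
        rw [h, hends.1, hends.2] at h3
        have bu := hbound u.1
        have bv := hbound v.1
        have e1 : |g u.1 - A| = A - g u.1 := by
          rw [abs_sub_comm]; exact abs_of_nonneg (by linarith [bu.2])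
        have e2 : |B - g v.1| = g v.1 - B := by
          rw [abs_sub_comm]; exact abs_of_nonneg (by linarith [bv.1])
        have e3 : g v.1 - g u.1 ≤ |g v.1 - g u.1| := le_abs_self _
        have : g v.1 ≤ g u.1 := by linarith
        rw [← hg u, ← hg v]
        exact this
      have hmono : Monotone (a ∘ (Fin.revPerm.trans σ)) := by
        intro i j hij
        simp only [Function.comp_apply, Equiv.trans_apply, Fin.revPerm_apply]
        apply hanti
        rw [Fin.val_rev, Fin.val_rev]
        have := j.2
        have : j.1 < n := j.2
        have hij' : i.1 ≤ j.1 := hij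
        omega
      have hre := mono_rearrange a ha (Fin.revPerm.trans σ) hmono
      right
      intro i
      have h5 := hre (Fin.rev i)
      have h6 : (Fin.revPerm.trans σ) (Fin.rev i) = σ i := by
        rw [Equiv.trans_apply, Fin.revPerm_apply, Fin.rev_rev]
      rw [h6] at h5
      rw [h5]
      apply amk' <;> omega
  · intro h
    rcases h with h | h
    · obtain ⟨f, hfdef⟩ : ∃ f : ℕ → ℤ, f = fun k => a ⟨min k (n - 1), by omega⟩ := ⟨_, rfl⟩
      have : ∀ k ∈ Finset.range (n - 1), |g (k + 1) - g k| = f (k + 1) - f k := by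
        intro k hk
        rw [Finset.mem_range] at hk
        have e1 : g (k + 1) = f (k + 1) := by
          rw [hgdef, hfdef]
          exact h ⟨min (k + 1) (n - 1), by omega⟩
        have e2 : g k = f k := by
          rw [hgdef, hfdef]
          exact h ⟨min k (n - 1), by omega⟩
        rw [e1, e2]
        apply abs_of_nonneg
        have hstep : f k ≤ f (k + 1) := by
          rw [hfdef]
          exact ha (Fin.mk_le_mk.mpr (by omega))
        linarith
      have r1 : f (n - 1) = A := by
        rw [hfdef, hA]
        exact amk' (min (n - 1) (n - 1)) (n - 1) (by omega) (by omega) (by omega)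
      have r2 : f 0 = B := by
        rw [hfdef, hB]
        exact amk' (min 0 (n - 1)) 0 (by omega) (by omega) (by omega)
      rw [Finset.sum_congr rfl this, Finset.sum_range_sub f (n - 1), r1, r2]
    · obtain ⟨f, hfdef⟩ : ∃ f : ℕ → ℤ, f = fun k => -a ⟨n - 1 - min k (n - 1), by omega⟩ := ⟨_, rfl⟩
      have : ∀ k ∈ Finset.range (n - 1), |g (k + 1) - g k| = f (k + 1) - f k := by
        intro k hk
        rw [Finset.mem_range] at hk
        have e1 : g (k + 1) = -f (k + 1) := by
          rw [hgdef, hfdef]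
          simp only [neg_neg]
          exact h ⟨min (k + 1) (n - 1), by omega⟩
        have e2 : g k = -f k := by
          rw [hgdef, hfdef]
          simp only [neg_neg]
          exact h ⟨min k (n - 1), by omega⟩
        rw [e1, e2]
        have : -f (k + 1) ≤ -f k := by
          simp only [hfdef, neg_neg]
          exact ha (Fin.mk_le_mk.mpr (by omega))
        rw [abs_of_nonpos (by linarith)]
        ring
      have r1 : -f (n - 1) = B := by
        rw [hfdef, hB]
        simp only [neg_neg]
        exact amk' (n - 1 - min (n - 1) (n - 1)) 0 (by omega) (by omega) (by omega)
      have r2 : -f 0 = A := by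
        rw [hfdef, hA]
        simp only [neg_neg]
        exact amk' (n - 1 - min 0 (n - 1)) (n - 1) (by omega) (by omega) (by omega)
      rw [Finset.sum_congr rfl this, Finset.sum_range_sub f (n - 1)]
      linarith [r1, r2]
end

section
/- Let a : Fin n → ℤ be totally positive normalized and let D be a maximal R-order in Mₙ(K). Then Δ_0 ∩ Δ_a ⊆ D if and only if there exists d : Fin n → ℤ with d(0) = 0 and 0 ≤ d(i+1) − d(i) ≤ a(i+1) − a(i) for all 0 ≤ i ≤ n−2, such that D = Δ_d. (Split case, B = K, of the Lemma: the maximal orders containing the generalized Eichler order Δ₀ ∩ Δ_[b] are exactly the orders Δ_[c] with 0 ≤ c_i ≤ b_i for every i.) -/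
set_option linter.unusedSectionVars false
set_option maxHeartbeats 1600000

section Aux
variable {R K : Type*} [CommRing R] [IsDomain R] [IsDiscreteValuationRing R]
  [Field K] [Algebra R K] [IsFractionRing R K]

variable (K)

lemma pK_ne_zero {π : R} (hπ : Irreducible π) : algebraMap R K π ≠ 0 := by
  simpa [IsFractionRing.to_map_eq_zero_iff] using hπ.ne_zero

variable {K}

lemma pzpow_mem {π : R} (hπ : Irreducible π) {m : ℤ} (hm : 0 ≤ m) :
    (algebraMap R K π) ^ m ∈ (algebraMap R K).range := by
  lift m to ℕ using hm
  exact ⟨π ^ m, by rw [map_pow, zpow_natCast]⟩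

lemma pzpow_mem_iff {π : R} (hπ : Irreducible π) {m : ℤ} :
    (algebraMap R K π) ^ m ∈ (algebraMap R K).range ↔ 0 ≤ m := by
  refine ⟨fun h => ?_, pzpow_mem hπ⟩
  by_contra hm
  push_neg at hm
  obtain ⟨r, hr⟩ := h
  have h2 : r * π ^ (-m).toNat = 1 := by
    apply IsFractionRing.injective R K
    rw [map_mul, hr, map_pow, ← zpow_natCast, Int.toNat_of_nonneg (by omega : (0:ℤ) ≤ -m),
      ← zpow_add₀ (pK_ne_zero K hπ), map_one]
    simp
  obtain ⟨k, hk⟩ := Nat.exists_eq_succ_of_ne_zero (by omega : (-m).toNat ≠ 0)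
  rw [hk, pow_succ] at h2
  exact hπ.not_isUnit (IsUnit.of_mul_eq_one (a := π) (r * π ^ k) (by rw [← h2]; ring))

lemma elt_form {π : R} (hπ : Irreducible π) (x : K) (hx : x ≠ 0) :
    ∃ (c : ℤ) (u : Rˣ), x = algebraMap R K (u : R) * (algebraMap R K π) ^ c := by
  obtain ⟨a, b, hb, rfl⟩ := IsFractionRing.div_surjective (A := R) (K := K) x
  have hb0 : b ≠ 0 := nonZeroDivisors.ne_zero hb
  have ha0 : a ≠ 0 := fun h => hx (by simp [h])
  obtain ⟨ma, ua, hua⟩ := IsDiscreteValuationRing.eq_unit_mul_pow_irreducible ha0 hπ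
  obtain ⟨mb, ub, hub⟩ := IsDiscreteValuationRing.eq_unit_mul_pow_irreducible hb0 hπ
  refine ⟨(ma : ℤ) - mb, ua * ub⁻¹, ?_⟩
  have hP := pK_ne_zero K hπ
  have key : (algebraMap R K) ↑(ua * ub⁻¹) * (algebraMap R K) ↑ub = (algebraMap R K) ↑ua := by
    rw [← map_mul]
    congr 1
    rw [Units.val_mul, mul_assoc, Units.inv_mul, mul_one]
  have hubK : (algebraMap R K) (ub : R) ≠ 0 := by
    simp [IsFractionRing.to_map_eq_zero_iff, Units.ne_zero]
  rw [hua, hub, map_mul, map_mul, map_pow, map_pow, zpow_sub₀ hP, zpow_natCast, zpow_natCast,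
    div_eq_iff (mul_ne_zero hubK (pow_ne_zero _ hP))]
  have hinv : ((algebraMap R K π) ^ mb)⁻¹ * (algebraMap R K π) ^ mb = 1 :=
    inv_mul_cancel₀ (pow_ne_zero _ hP)
  linear_combination (-(algebraMap R K π ^ ma * ((algebraMap R K π) ^ mb)⁻¹ *
      (algebraMap R K π) ^ mb)) * key +
    (-(algebraMap R K (ua : R) * (algebraMap R K π) ^ ma)) * hinv
end Aux

section Aux2
variable {R K : Type*} [CommRing R] [IsDomain R] [IsDiscreteValuationRing R]
  [Field K] [Algebra R K] [IsFractionRing R K]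

lemma mem_span_zpow {π : R} (hπ : Irreducible π) {x : K} {c : ℤ} :
    x ∈ Submodule.span R {(algebraMap R K π) ^ c} ↔
      (algebraMap R K π) ^ (-c) * x ∈ (algebraMap R K).range := by
  have hP : algebraMap R K π ≠ 0 := pK_ne_zero K hπ
  rw [Submodule.mem_span_singleton]
  constructor
  · rintro ⟨r, rfl⟩
    refine ⟨r, ?_⟩
    rw [Algebra.smul_def, ← mul_assoc, mul_comm _ (algebraMap R K r), mul_assoc,
      ← zpow_add₀ hP]
    simp
  · rintro ⟨r, hr⟩
    refine ⟨r, ?_⟩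
    rw [Algebra.smul_def, hr, mul_comm ((algebraMap R K π) ^ (-c)) x, mul_assoc,
      ← zpow_add₀ hP]
    simp

lemma span_zpow_le {π : R} (hπ : Irreducible π) {b c : ℤ} (h : b ≤ c) :
    Submodule.span R {(algebraMap R K π) ^ c} ≤ Submodule.span R {(algebraMap R K π) ^ b} := by
  rw [Submodule.span_le, Set.singleton_subset_iff, SetLike.mem_coe, mem_span_zpow hπ,
    ← zpow_add₀ (pK_ne_zero K hπ)]
  exact pzpow_mem hπ (by omega)

lemma fg_submodule_eq_span_zpow {π : R} (hπ : Irreducible π) (M : Submodule R K)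
    (hfg : M.FG) (hM : M ≠ ⊥) :
    ∃ c : ℤ, M = Submodule.span R {(algebraMap R K π) ^ c} := by
  obtain ⟨S, hS⟩ := hfg
  classical
  set T : Finset K := S.filter (fun x => x ≠ 0) with hT
  have hTne : T.Nonempty := by
    by_contra h
    rw [Finset.not_nonempty_iff_eq_empty] at h
    apply hM
    rw [← hS]
    apply Submodule.span_eq_bot.2
    intro x hx
    have : x = 0 := by
      by_contra hx0
      have : x ∈ T := by rw [hT]; exact Finset.mem_filter.2 ⟨hx, hx0⟩
      simp [h] at this
    simp [this]
  have hform : ∀ x ∈ T, ∃ c : ℤ,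
      Submodule.span R {x} = Submodule.span R {(algebraMap R K π) ^ c} := by
    intro x hx
    have hx0 : x ≠ 0 := (Finset.mem_filter.1 hx).2
    obtain ⟨c, u, hu⟩ := elt_form hπ x hx0
    refine ⟨c, le_antisymm ?_ ?_⟩
    · rw [Submodule.span_le, Set.singleton_subset_iff, SetLike.mem_coe, hu,
        ← Algebra.smul_def]
      exact Submodule.smul_mem _ _ (Submodule.mem_span_singleton_self _)
    · rw [Submodule.span_le, Set.singleton_subset_iff, SetLike.mem_coe]
      have : (algebraMap R K π) ^ c = ((u⁻¹ : Rˣ) : R) • x := by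
        rw [hu, Algebra.smul_def, ← mul_assoc, ← map_mul]
        simp
      rw [this]
      exact Submodule.smul_mem _ _ (Submodule.mem_span_singleton_self _)
  choose! g hg using hform
  have hTim : (T.image g).Nonempty := hTne.image g
  set m := (T.image g).min' hTim with hm
  refine ⟨m, le_antisymm ?_ ?_⟩
  · rw [← hS, Submodule.span_le]
    intro x hx
    rcases eq_or_ne x 0 with rfl | hx0
    · simp
    have hxT : x ∈ T := Finset.mem_filter.2 ⟨hx, hx0⟩
    have hx_mem : x ∈ Submodule.span R {(algebraMap R K π) ^ g x} := by
      rw [← hg x hxT]; exact Submodule.mem_span_singleton_self _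
    exact span_zpow_le hπ (Finset.min'_le _ _ (Finset.mem_image_of_mem g hxT)) hx_mem
  · obtain ⟨x₀, hx₀T, hx₀⟩ := Finset.mem_image.1 ((T.image g).min'_mem hTim)
    have h1 : Submodule.span R {(algebraMap R K π) ^ m} =
        Submodule.span R {x₀} := by rw [hm, ← hx₀, ← hg x₀ hx₀T]
    rw [h1]
    apply (Submodule.span_singleton_le_iff_mem _ _).2
    rw [← hS]
    exact Submodule.subset_span (Finset.mem_filter.1 hx₀T).1
end Aux2



variable (R K : Type*) [CommRing R] [IsDomain R] [IsDiscreteValuationRing R]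
  [Field K] [Algebra R K] [IsFractionRing R K]

/-- The order `Δ_a` in `Mₙ(K)`: matrices `X` with `π^(a j - a i) * X i j ∈ R` for all `i, j`. -/
def Delta (π : R) {n : ℕ} (a : Fin n → ℤ) : Set (Matrix (Fin n) (Fin n) K) :=
  {X | ∀ i j, (algebraMap R K π) ^ (a j - a i) * X i j ∈ (algebraMap R K).range}

/-- An `R`-order in `Mₙ(K)`: an `R`-subalgebra, finitely generated as an `R`-module,
spanning `Mₙ(K)` over `K`. -/
def IsOrder {n : ℕ} (D : Subalgebra R (Matrix (Fin n) (Fin n) K)) : Prop :=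
  (Subalgebra.toSubmodule D).FG ∧
    Submodule.span K (D : Set (Matrix (Fin n) (Fin n) K)) = ⊤

/-- A maximal `R`-order in `Mₙ(K)`. -/
def IsMaximalOrder {n : ℕ} (D : Subalgebra R (Matrix (Fin n) (Fin n) K)) : Prop :=
  IsOrder R K D ∧ ∀ D' : Subalgebra R (Matrix (Fin n) (Fin n) K),
    IsOrder R K D' → D ≤ D' → D' = D


section MAux
variable {n : ℕ}

/-- `Delta` as a subalgebra. -/
def DeltaAlg (π : R) (hπ : Irreducible π) (c : Fin n → ℤ) :
    Subalgebra R (Matrix (Fin n) (Fin n) K) where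
  carrier := Delta R K π c
  add_mem' := fun {X Y} hX hY i j => by
    have := RingHom.range (algebraMap R K)
    simpa [Matrix.add_apply, mul_add] using add_mem (hX i j) (hY i j)
  zero_mem' := fun i j => by simp
  mul_mem' := fun {X Y} hX hY i j => by
    have hP : algebraMap R K π ≠ 0 := pK_ne_zero K hπ
    rw [Matrix.mul_apply, Finset.mul_sum]
    apply sum_mem
    intro k _
    have he : (algebraMap R K π) ^ (c j - c i) =
        (algebraMap R K π) ^ (c k - c i) * (algebraMap R K π) ^ (c j - c k) := by
      rw [← zpow_add₀ hP]; congr 1; ring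
    rw [he]
    convert mul_mem (hX i k) (hY k j) using 1
    ring
  one_mem' := fun i j => by
    rcases eq_or_ne i j with rfl | h
    · simpa [Matrix.one_apply] using one_mem (algebraMap R K).range
    · simp [Matrix.one_apply, h]
  algebraMap_mem' := fun r i j => by
    rcases eq_or_ne i j with rfl | h
    · simpa [Matrix.algebraMap_matrix_apply] using RingHom.mem_range_self _ r
    · simp [Matrix.algebraMap_matrix_apply, h]

lemma mem_deltaAlg_iff (π : R) (hπ : Irreducible π) (c : Fin n → ℤ)
    (X : Matrix (Fin n) (Fin n) K) :
    X ∈ DeltaAlg R K π hπ c ↔ X ∈ Delta R K π c := Iff.rfl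

lemma smul_basis_mem_delta (π : R) (hπ : Irreducible π) (c : Fin n → ℤ) (i j : Fin n) {m : ℤ}
    (h : 0 ≤ m + c j - c i) :
    ((algebraMap R K π) ^ m • Matrix.single i j (1:K)) ∈ Delta R K π c := by
  intro k l
  have hP : algebraMap R K π ≠ 0 := pK_ne_zero K hπ
  rw [Matrix.smul_apply, smul_eq_mul]
  by_cases hkl : i = k ∧ j = l
  · obtain ⟨rfl, rfl⟩ := hkl
    simp only [Matrix.single, Matrix.of_apply, true_and, and_self, if_true, mul_one]
    rw [← zpow_add₀ hP]
    exact pzpow_mem hπ (by omega)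
  · simp [Matrix.single, hkl]


variable {n : ℕ}

lemma deltaAlg_fg (π : R) (hπ : Irreducible π) (c : Fin n → ℤ) :
    (Subalgebra.toSubmodule (DeltaAlg R K π hπ c)).FG := by
  classical
  have hP : algebraMap R K π ≠ 0 := pK_ne_zero K hπ
  refine ⟨Finset.univ.image (fun ij : Fin n × Fin n =>
    (algebraMap R K π) ^ (c ij.1 - c ij.2) • Matrix.single ij.1 ij.2 (1:K)), ?_⟩
  apply le_antisymm
  · rw [Submodule.span_le]
    intro Y hY
    simp only [Finset.coe_image, Set.mem_image, Finset.mem_coe] at hY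
    obtain ⟨ij, _, rfl⟩ := hY
    exact smul_basis_mem_delta R K π hπ c ij.1 ij.2 (by omega)
  · intro X hX
    have hX' : ∀ i j, ∃ r : R, algebraMap R K r =
        (algebraMap R K π) ^ (c j - c i) * X i j := fun i j => hX i j
    choose r hr using hX'
    have hXeq : X = ∑ j : Fin n, ∑ i : Fin n, r i j •
        ((algebraMap R K π) ^ (c i - c j) • Matrix.single i j (1:K)) := by
      ext k l
      rw [Matrix.sum_apply]
      simp only [Matrix.sum_apply, Matrix.smul_apply, Matrix.single, Matrix.of_apply,
        smul_eq_mul, mul_ite, mul_one, mul_zero, smul_ite, smul_zero, ite_and]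
      simp only [Fintype.sum_ite_eq']
      simp only [Algebra.smul_def]
      rw [hr k l, mul_comm ((algebraMap R K π) ^ (c l - c k)) (X k l), mul_assoc,
        ← zpow_add₀ hP]
      simp
    rw [hXeq]
    apply sum_mem
    intro j _
    apply sum_mem
    intro i _
    apply Submodule.smul_mem
    apply Submodule.subset_span
    simp only [Finset.coe_image, Set.mem_image, Finset.mem_coe]
    exact ⟨(i, j), Finset.mem_univ _, rfl⟩

lemma deltaAlg_span_top (π : R) (hπ : Irreducible π) (c : Fin n → ℤ) :
    Submodule.span K ((DeltaAlg R K π hπ c : Set (Matrix (Fin n) (Fin n) K))) = ⊤ := by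
  have hP : algebraMap R K π ≠ 0 := pK_ne_zero K hπ
  rw [eq_top_iff]
  intro X hX
  clear hX
  induction X using Matrix.induction_on' with
  | h_zero => exact Submodule.zero_mem _
  | h_add p q hp hq => exact Submodule.add_mem _ hp hq
  | h_std_basis i j x =>
    have hgen : ((algebraMap R K π) ^ (c i - c j) • Matrix.single i j (1:K)) ∈
        (DeltaAlg R K π hπ c : Set (Matrix (Fin n) (Fin n) K)) :=
      smul_basis_mem_delta R K π hπ c i j (by omega)
    have : Matrix.single i j x = (x * (algebraMap R K π) ^ (c j - c i)) •
        ((algebraMap R K π) ^ (c i - c j) • Matrix.single i j (1:K)) := by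
      rw [smul_smul, Matrix.smul_single, smul_eq_mul, mul_one, mul_assoc,
        ← zpow_add₀ hP]
      simp
    rw [this]
    exact Submodule.smul_mem _ _ (Submodule.subset_span hgen)

lemma isOrder_deltaAlg (π : R) (hπ : Irreducible π) (c : Fin n → ℤ) :
    IsOrder R K (DeltaAlg R K π hπ c) :=
  ⟨deltaAlg_fg R K π hπ c, deltaAlg_span_top R K π hπ c⟩


variable {n : ℕ}

/-- The endomorphism order of a lattice. -/
def EndAlg (L : Submodule R (Fin n → K)) : Subalgebra R (Matrix (Fin n) (Fin n) K) where
  carrier := {X | ∀ v ∈ L, X.mulVec v ∈ L}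
  mul_mem' := fun {X Y} hX hY v hv => by
    rw [← Matrix.mulVec_mulVec]; exact hX _ (hY _ hv)
  one_mem' := fun v hv => by rwa [Matrix.one_mulVec]
  add_mem' := fun {X Y} hX hY v hv => by
    rw [Matrix.add_mulVec]; exact L.add_mem (hX v hv) (hY v hv)
  zero_mem' := fun v hv => by rw [Matrix.zero_mulVec]; exact L.zero_mem
  algebraMap_mem' := fun r v hv => by
    have h : (algebraMap R (Matrix (Fin n) (Fin n) K) r).mulVec v = r • v := by
      ext i
      simp [Matrix.mulVec, dotProduct, Matrix.algebraMap_matrix_apply, ite_mul,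
        Algebra.smul_def]
    rw [h]; exact L.smul_mem r hv

lemma delta_congr (π : R) {c d : Fin n → ℤ} (h : ∀ i j, d j - d i = c j - c i) :
    Delta R K π d = Delta R K π c := by
  ext X
  constructor <;> intro hX i j
  · rw [← h i j]; exact hX i j
  · rw [h i j]; exact hX i j

lemma tele {c e : Fin n → ℤ}
    (h : ∀ i : Fin (n-1),
        0 ≤ c ⟨i.1 + 1, by have := i.2; omega⟩ - c ⟨i.1, by have := i.2; omega⟩ ∧
        c ⟨i.1 + 1, by have := i.2; omega⟩ - c ⟨i.1, by have := i.2; omega⟩ ≤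
          e ⟨i.1 + 1, by have := i.2; omega⟩ - e ⟨i.1, by have := i.2; omega⟩) :
    ∀ i j : Fin n, i ≤ j → (0 ≤ c j - c i ∧ c j - c i ≤ e j - e i) := by
  have step : ∀ (k l : Fin n), (k : ℕ) + 1 = l → 0 ≤ c l - c k ∧ c l - c k ≤ e l - e k := by
    intro k l hkl
    have hl := l.2
    have hk : (k : ℕ) < n - 1 := by omega
    have := h ⟨k, hk⟩
    have h1 : (⟨(⟨(k : ℕ), hk⟩ : Fin (n-1)).1 + 1, by have := hk; omega⟩ : Fin n) = l :=
      Fin.ext (by simpa using hkl)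
    have h2 : (⟨(⟨(k : ℕ), hk⟩ : Fin (n-1)).1, by have := hk; omega⟩ : Fin n) = k :=
      Fin.ext (by simp)
    rwa [h1, h2] at this
  intro i j hij
  obtain ⟨di, hdi⟩ : ∃ d : ℕ, (j : ℕ) = i + d := ⟨j - i, by
    have := Fin.le_def.1 hij; omega⟩
  clear hij
  induction di generalizing j with
  | zero =>
    have : j = i := Fin.ext (by omega)
    subst this; simp
  | succ d ih =>
    have hjn := j.2
    have hjm : (i : ℕ) + d < n := by omega
    have h1 := ih ⟨(i : ℕ) + d, hjm⟩ (by simp)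
    have h2 := step ⟨(i : ℕ) + d, hjm⟩ j (by simp [hdi]; omega)
    exact ⟨by omega, by omega⟩


end MAux

/-- For totally positive normalized `a`, the maximal `R`-orders containing the
generalized Eichler order `Δ_0 ∩ Δ_a` are exactly the `Δ_d` with `d 0 = 0` and
`0 ≤ d (i+1) - d i ≤ a (i+1) - a i` for all `i`. -/
theorem stmt4 (π : R) (hπ : Irreducible π) (n : ℕ) (hn : 1 ≤ n)
    (a : Fin n → ℤ) (ha0 : a ⟨0, hn⟩ = 0) (hmono : Monotone a)
    (D : Subalgebra R (Matrix (Fin n) (Fin n) K)) (hD : IsMaximalOrder R K D) :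
    Delta R K π (0 : Fin n → ℤ) ∩ Delta R K π a ⊆ (D : Set (Matrix (Fin n) (Fin n) K)) ↔
    ∃ d : Fin n → ℤ, d ⟨0, hn⟩ = 0 ∧
      (∀ i : Fin (n - 1),
        0 ≤ d ⟨i.1 + 1, by have := i.2; omega⟩ - d ⟨i.1, by have := i.2; omega⟩ ∧
        d ⟨i.1 + 1, by have := i.2; omega⟩ - d ⟨i.1, by have := i.2; omega⟩ ≤
          a ⟨i.1 + 1, by have := i.2; omega⟩ - a ⟨i.1, by have := i.2; omega⟩) ∧
      (D : Set (Matrix (Fin n) (Fin n) K)) = Delta R K π d := by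
  classical
  have hP : algebraMap R K π ≠ 0 := pK_ne_zero K hπ
  constructor
  · -- forward direction
    intro hsub
    obtain ⟨⟨hfg, hspan⟩, hmax⟩ := hD
    obtain ⟨S, hS⟩ := hfg
    set L : Submodule R (Fin n → K) := Submodule.span R
      ↑((S ×ˢ (Finset.univ : Finset (Fin n))).image fun s =>
        Matrix.mulVec s.1 (Pi.single s.2 1)) with hL
    have hLfg : L.FG := ⟨_, rfl⟩
    have hSD : (S : Set (Matrix (Fin n) (Fin n) K)) ⊆ (D : Set _) := by
      intro Y hY
      have : Y ∈ Subalgebra.toSubmodule D := by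
        rw [← hS]; exact Submodule.subset_span hY
      exact this
    have hcol : ∀ Z : Matrix (Fin n) (Fin n) K, Z ∈ D → ∀ j,
        Z.mulVec (Pi.single j 1) ∈ L := by
      intro Z hZ j
      have hZ' : Z ∈ Submodule.span R (S : Set (Matrix (Fin n) (Fin n) K)) := by
        rw [hS]; exact hZ
      clear hZ
      induction hZ' using Submodule.span_induction with
      | mem x hx =>
        apply Submodule.subset_span
        refine Finset.mem_coe.2 (Finset.mem_image.2 ⟨(x, j), ?_, rfl⟩)
        exact Finset.mem_product.2 ⟨hx, Finset.mem_univ _⟩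
      | zero => rw [Matrix.zero_mulVec]; exact L.zero_mem
      | add x y hx hy ihx ihy => rw [Matrix.add_mulVec]; exact L.add_mem ihx ihy
      | smul r x hx ih => rw [Matrix.smul_mulVec]; exact L.smul_mem r ih
    have hDEnd : ∀ X ∈ D, X ∈ EndAlg R K L := by
      intro X hX v hv
      induction hv using Submodule.span_induction with
      | mem v hv =>
        obtain ⟨⟨Y, j⟩, hYj, rfl⟩ := Finset.mem_image.1 (Finset.mem_coe.1 hv)
        obtain ⟨hYS, -⟩ := Finset.mem_product.1 hYj
        rw [Matrix.mulVec_mulVec]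
        exact hcol _ (D.mul_mem hX (hSD hYS)) _
      | zero => rw [Matrix.mulVec_zero]; exact L.zero_mem
      | add x y hx hy ihx ihy => rw [Matrix.mulVec_add]; exact L.add_mem ihx ihy
      | smul r x hx ih => rw [Matrix.mulVec_smul]; exact L.smul_mem r ih
    have h1L : ∀ j, Pi.single j (1:K) ∈ L := by
      intro j
      have := hcol 1 D.one_mem j
      rwa [Matrix.one_mulVec] at this
    set M : Fin n → Submodule R K := fun i =>
      L.map (LinearMap.proj (R := R) (φ := fun _ : Fin n => K) i) with hM
    have hMfg : ∀ i, (M i).FG := fun i => hLfg.map _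
    have hMne : ∀ i, M i ≠ ⊥ := by
      intro i hbot
      have h1 : (1:K) ∈ M i := ⟨Pi.single i 1, h1L i, by simp⟩
      rw [hbot] at h1
      exact one_ne_zero ((Submodule.mem_bot R).1 h1)
    choose c hc using fun i => fg_submodule_eq_span_zpow hπ (M i) (hMfg i) (hMne i)
    -- stability under Eichler order elements
    have hEstab : ∀ (i j : Fin n) (m : ℤ), 0 ≤ m → 0 ≤ m + a j - a i →
        ((algebraMap R K π) ^ m • Matrix.single i j (1:K)) ∈ EndAlg R K L := by
      intro i j m h0 ha'
      apply hDEnd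
      apply hsub
      exact ⟨smul_basis_mem_delta R K π hπ 0 i j (by simp only [Pi.zero_apply]; omega),
        smul_basis_mem_delta R K π hπ a i j (by omega)⟩
    have hstab2 : ∀ (i j : Fin n) (m : ℤ), 0 ≤ m → 0 ≤ m + a j - a i →
        ∀ x ∈ M j, (algebraMap R K π) ^ m * x ∈ M i := by
      intro i j m h0 ha' x hx
      obtain ⟨w, hw, rfl⟩ := hx
      have h := hEstab i j m h0 ha' w hw
      rw [Matrix.smul_mulVec, Matrix.single_mulVec] at h
      refine ⟨_, h, ?_⟩
      simp
    -- L is determined coordinatewise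
    have hLiff : ∀ v, v ∈ L ↔ ∀ i, v i ∈ M i := by
      intro v
      constructor
      · exact fun hv i => ⟨v, hv, rfl⟩
      · intro hv
        have hveq : v = ∑ i, Pi.single i (v i) := by
          ext j
          rw [Finset.sum_apply]
          simp [Pi.single_apply]
        rw [hveq]
        apply sum_mem
        intro i _
        obtain ⟨w, hw, hwi⟩ := hv i
        have h := hEstab i i 0 le_rfl (by omega) w hw
        rw [Matrix.smul_mulVec, Matrix.single_mulVec, zpow_zero, one_smul] at h
        have hupd : Function.update (0 : Fin n → K) i (1 * w i) = Pi.single i (v i) := by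
          ext k
          rw [← hwi]
          simp [Function.update_apply, Pi.single_apply]
        rwa [hupd] at h
    -- membership translations
    have hMzpow : ∀ (i : Fin n) (x : K), x ∈ M i ↔
        (algebraMap R K π) ^ (-(c i)) * x ∈ (algebraMap R K).range := by
      intro i x
      rw [hc i]
      exact mem_span_zpow hπ
    -- EndAlg = Delta c
    have hEnd_sub : ∀ X, X ∈ EndAlg R K L → X ∈ Delta R K π c := by
      intro X hX i j
      have hvL : Pi.single j ((algebraMap R K π) ^ (c j)) ∈ L := by
        rw [hLiff]
        intro k
        rcases eq_or_ne j k with rfl | hk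
        · rw [Pi.single_eq_same, hMzpow, ← zpow_add₀ hP]
          simp
        · rw [Pi.single_eq_of_ne (Ne.symm hk)]
          exact (M k).zero_mem
      have h := hX _ hvL
      rw [Matrix.mulVec_single] at h
      have h2 := (hLiff _).1 h i
      rw [hMzpow] at h2
      have hcalc : (algebraMap R K π) ^ (c j - c i) * X i j =
          (algebraMap R K π) ^ (-(c i)) * (X i j * (algebraMap R K π) ^ (c j)) := by
        rw [show c j - c i = (-(c i)) + c j by ring, zpow_add₀ hP]
        ring
      rw [hcalc]
      exact h2
    have hEnd_sup : ∀ X, X ∈ Delta R K π c → X ∈ EndAlg R K L := by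
      intro X hX v hv
      rw [hLiff]
      intro i
      have hmv : X.mulVec v i = ∑ j, X i j * v j := by
        simp [Matrix.mulVec, dotProduct]
      rw [hmv]
      apply sum_mem
      intro j _
      have hvj := (hLiff v).1 hv j
      rw [hc j, Submodule.mem_span_singleton] at hvj
      obtain ⟨r, hr⟩ := hvj
      have heq : X i j * v j = r • ((algebraMap R K π) ^ (c j) * X i j) := by
        rw [← hr, Algebra.smul_def, Algebra.smul_def]
        ring
      rw [heq]
      apply (M i).smul_mem
      rw [hMzpow]
      have hcalc : (algebraMap R K π) ^ (-(c i)) * ((algebraMap R K π) ^ (c j) * X i j) =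
          (algebraMap R K π) ^ (c j - c i) * X i j := by
        rw [show c j - c i = (-(c i)) + c j by ring, zpow_add₀ hP]
        ring
      rw [hcalc]
      exact hX i j
    -- maximality
    have hDle : D ≤ DeltaAlg R K π hπ c := fun X hX => hEnd_sub X (hDEnd X hX)
    have hDeq := hmax (DeltaAlg R K π hπ c) (isOrder_deltaAlg R K π hπ c) hDle
    have hDset : (D : Set (Matrix (Fin n) (Fin n) K)) = Delta R K π c := by
      rw [← hDeq]; rfl
    -- consecutive inequalities for c
    have hcons : ∀ i : Fin (n - 1),
        0 ≤ c ⟨i.1 + 1, by have := i.2; omega⟩ - c ⟨i.1, by have := i.2; omega⟩ ∧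
        c ⟨i.1 + 1, by have := i.2; omega⟩ - c ⟨i.1, by have := i.2; omega⟩ ≤
          a ⟨i.1 + 1, by have := i.2; omega⟩ - a ⟨i.1, by have := i.2; omega⟩ := by
      intro i
      have hi2 := i.2
      set k : Fin n := ⟨i.1, by omega⟩ with hk
      set l : Fin n := ⟨i.1 + 1, by omega⟩ with hl
      have hkl : k ≤ l := by rw [Fin.le_def]; simp [hk, hl]
      have hma : a k ≤ a l := hmono hkl
      constructor
      · -- M l ≤ M k gives 0 ≤ c l - c k
        have h := hstab2 k l 0 le_rfl (by omega) ((algebraMap R K π) ^ (c l))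
          (by rw [hc l]; exact Submodule.mem_span_singleton_self _)
        rw [zpow_zero, one_mul, hMzpow, ← zpow_add₀ hP] at h
        have := (pzpow_mem_iff hπ).1 h
        omega
      · have h := hstab2 l k (a l - a k) (by omega) (by omega) ((algebraMap R K π) ^ (c k))
          (by rw [hc k]; exact Submodule.mem_span_singleton_self _)
        rw [hMzpow, ← zpow_add₀ hP, ← zpow_add₀ hP] at h
        have := (pzpow_mem_iff hπ).1 h
        omega
    -- normalize
    refine ⟨fun i => c i - c ⟨0, hn⟩, by ring, fun i => ?_, ?_⟩
    · have h1 := (hcons i).1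
      have h2 := (hcons i).2
      constructor
      · beta_reduce
        omega
      · beta_reduce
        omega
    · rw [hDset]
      exact (delta_congr R K π (fun i j => by ring)).symm
  · -- backward direction
    rintro ⟨d, hd0, hdcons, hDset⟩ X hX
    obtain ⟨hX0, hXa⟩ := hX
    have hX0' : ∀ i j, X i j ∈ (algebraMap R K).range := by
      intro i j
      have := hX0 i j
      simpa using this
    rw [show (D : Set (Matrix (Fin n) (Fin n) K)) = Delta R K π d from hDset]
    intro i j
    have htele := tele (c := d) (e := a) hdcons
    rcases le_total i j with h | h
    · obtain ⟨h1, h2⟩ := htele i j h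
      exact mul_mem (pzpow_mem hπ h1) (hX0' i j)
    · obtain ⟨h1, h2⟩ := htele j i h
      rw [show d j - d i = ((d j - d i) - (a j - a i)) + (a j - a i) by ring,
        zpow_add₀ hP, mul_assoc]
      exact mul_mem (pzpow_mem hπ (by omega)) (hXa i j)
end

section
/- Let Λ and M be full R-lattices in Kⁿ, i.e. finitely generated R-submodules of Kⁿ = (Fin n → K) that span Kⁿ over K. Then the stabilizer rings Δ_Λ = {X ∈ Mₙ(K) | X·v ∈ Λ for all v ∈ Λ} and Δ_M = {X ∈ Mₙ(K) | X·v ∈ M for all v ∈ M} are equal if and only if there exists c ∈ K* with M = c·Λ. (Split case, B = K, of the statement of Section 1: Δ_Λ = Δ_M if and only if M = Λλ for some λ ∈ B*.) -/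
set_option synthInstance.maxHeartbeats 400000
set_option maxHeartbeats 1000000
set_option linter.unusedSectionVars false

variable (R K : Type*) [CommRing R] [IsDomain R] [IsDiscreteValuationRing R]
  [Field K] [Algebra R K] [IsFractionRing R K]

/-- The stabilizer ring `Δ_Λ = {X ∈ Mₙ(K) | X·v ∈ Λ for all v ∈ Λ}` of an `R`-submodule `Λ`
of `Kⁿ`. -/
def stabRing {n : ℕ} (Λ : Submodule R (Fin n → K)) : Set (Matrix (Fin n) (Fin n) K) :=
  {X | ∀ v ∈ Λ, X.mulVec v ∈ Λ}

section Aux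

variable {R K} {n : ℕ}

lemma aux_denom (Λ : Submodule R (Fin n → K)) (hfg : Λ.FG) :
    ∃ s : R, s ≠ 0 ∧ ∀ x ∈ Λ, ∀ i, ∃ r : R, algebraMap R K r = algebraMap R K s * x i := by
  obtain ⟨F, hF⟩ := hfg
  obtain ⟨b, hb⟩ := IsLocalization.exist_integer_multiples_of_finite (nonZeroDivisors R)
    (fun p : F × Fin n => (p.1 : Fin n → K) p.2)
  refine ⟨b, nonZeroDivisors.coe_ne_zero b, ?_⟩
  intro x hx i
  rw [← hF] at hx
  induction hx using Submodule.span_induction with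
  | mem y hy =>
      obtain ⟨r, hr⟩ := hb ⟨⟨y, hy⟩, i⟩
      exact ⟨r, by simpa [Algebra.smul_def] using hr⟩
  | zero => exact ⟨0, by simp⟩
  | add y z _ _ hy hz =>
      obtain ⟨r1, h1⟩ := hy; obtain ⟨r2, h2⟩ := hz
      exact ⟨r1 + r2, by simp [h1, h2, mul_add]⟩
  | smul t y _ hy =>
      obtain ⟨r1, h1⟩ := hy
      refine ⟨t * r1, ?_⟩
      simp only [map_mul, h1, Pi.smul_apply, Algebra.smul_def]
      ring

lemma aux_one (Λ : Submodule R (Fin n → K)) (x : Fin n → K)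
    (hx : x ∈ Submodule.span K (Λ : Set (Fin n → K))) :
    ∃ r : R, r ≠ 0 ∧ algebraMap R K r • x ∈ Λ := by
  induction hx using Submodule.span_induction with
  | mem y hy => exact ⟨1, one_ne_zero, by simpa using Λ.smul_mem 1 hy⟩
  | zero => exact ⟨1, one_ne_zero, by simp⟩
  | add y z _ _ hy hz =>
      obtain ⟨r1, h1, m1⟩ := hy; obtain ⟨r2, h2, m2⟩ := hz
      refine ⟨r1 * r2, mul_ne_zero h1 h2, ?_⟩
      have e1 : algebraMap R K (r1 * r2) • y = r2 • (algebraMap R K r1 • y) := by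
        rw [map_mul, mul_comm, mul_smul, algebraMap_smul]
      have e2 : algebraMap R K (r1 * r2) • z = r1 • (algebraMap R K r2 • z) := by
        rw [map_mul, mul_smul, algebraMap_smul]
      rw [smul_add, e1, e2]
      exact Λ.add_mem (Λ.smul_mem _ m1) (Λ.smul_mem _ m2)
  | smul k y _ hy =>
      obtain ⟨r1, h1, m1⟩ := hy
      obtain ⟨p, q, hq, rfl⟩ := IsFractionRing.div_surjective (A := R) k
      have hq0 : (q : R) ≠ 0 := nonZeroDivisors.coe_ne_zero ⟨q, hq⟩
      have hq0' : algebraMap R K q ≠ 0 := by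
        simpa using (IsFractionRing.injective R K).ne_iff.2 hq0
      refine ⟨r1 * q, mul_ne_zero h1 hq0, ?_⟩
      have e : algebraMap R K (r1 * q) * (algebraMap R K p / algebraMap R K q)
          = algebraMap R K p * algebraMap R K r1 := by
        field_simp; rw [map_mul]; ring
      rw [smul_smul, e, mul_smul, algebraMap_smul]
      exact Λ.smul_mem _ m1

lemma aux_clear (Λ M : Submodule R (Fin n → K)) (hMfg : M.FG)
    (hΛspan : Submodule.span K (Λ : Set (Fin n → K)) = ⊤) :
    ∃ r : R, r ≠ 0 ∧ ∀ m ∈ M, algebraMap R K r • m ∈ Λ := by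
  classical
  obtain ⟨F, hF⟩ := hMfg
  choose f hf0 hf using fun x : F =>
    aux_one Λ (x : Fin n → K) (by rw [hΛspan]; trivial)
  refine ⟨∏ x : F, f x, Finset.prod_ne_zero_iff.2 fun x _ => hf0 x, ?_⟩
  intro m hm
  rw [← hF] at hm
  induction hm using Submodule.span_induction with
  | mem y hy =>
      rw [← Finset.mul_prod_erase Finset.univ f (Finset.mem_univ (⟨y, hy⟩ : F)),
        map_mul, mul_comm, mul_smul, algebraMap_smul]
      exact Λ.smul_mem _ (hf ⟨y, hy⟩)
  | zero => simp
  | add y z _ _ hy hz => rw [smul_add]; exact Λ.add_mem hy hz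
  | smul t y _ hy =>
      rw [smul_comm]
      exact Λ.smul_mem _ hy

lemma aux_key (Λ : Submodule R (Fin n → K)) (hfg : Λ.FG)
    (hΛspan : Submodule.span K (Λ : Set (Fin n → K)) = ⊤) {ϖ : R} (hϖ : Irreducible ϖ)
    {v : Fin n → K} (hv : v ∈ Λ) (hv2 : ∀ l ∈ Λ, v ≠ ϖ • l)
    {w : Fin n → K} (hw : w ∈ Λ) :
    ∃ X : Matrix (Fin n) (Fin n) K, X ∈ stabRing R K Λ ∧ X.mulVec v = w := by
  classical
  haveI : NoZeroSMulDivisors R K :=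
    ⟨fun {c x} h => by
      rw [Algebra.smul_def, mul_eq_zero, map_eq_zero_iff _ (IsFractionRing.injective R K)] at h
      exact h⟩
  haveI : Module.Finite R Λ := Module.Finite.iff_fg.2 hfg
  haveI : Module.Free R Λ := inferInstance
  set ι := Module.Free.ChooseBasisIndex R Λ
  set B := Module.Free.chooseBasis R Λ with hB
  set b : ι → (Fin n → K) := fun i => (B i : Fin n → K) with hb
  have hbli : LinearIndependent R b := by
    have := B.linearIndependent.map' Λ.subtype (Submodule.ker_subtype Λ)
    exact this
  have hbliK : LinearIndependent K b := (LinearIndependent.iff_fractionRing R K).1 hbli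
  -- every element of Λ expands in b with R coefficients
  have hx_expand : ∀ (x : Fin n → K) (hx : x ∈ Λ),
      x = ∑ j, algebraMap R K (B.repr ⟨x, hx⟩ j) • b j := by
    intro x hx
    have h0 := congrArg (Λ.subtype) (B.sum_repr ⟨x, hx⟩)
    simp only [map_sum, LinearMap.map_smul, Submodule.coe_subtype] at h0
    simp_rw [algebraMap_smul]
    exact h0.symm
  have hspanb : ⊤ ≤ Submodule.span K (Set.range b) := by
    rw [← hΛspan]
    refine Submodule.span_le.2 fun x hx => ?_
    rw [hx_expand x hx]
    exact Submodule.sum_mem _ fun j _ =>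
      Submodule.smul_mem _ _ (Submodule.subset_span ⟨j, rfl⟩)
  set bK : Module.Basis ι K (Fin n → K) := Module.Basis.mk hbliK hspanb with hbK
  have hbKb : ∀ j, bK j = b j := fun j => by rw [hbK, Module.Basis.mk_apply]
  have hrepr : ∀ (x : Fin n → K) (hx : x ∈ Λ) (i : ι),
      bK.repr x i = algebraMap R K (B.repr ⟨x, hx⟩ i) := by
    intro x hx i
    conv_lhs => rw [hx_expand x hx]
    simp_rw [← hbKb]
    rw [map_sum, Finsupp.finset_sum_apply]
    simp_rw [map_smul, Finsupp.smul_apply, Module.Basis.repr_self, Finsupp.single_apply]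
    simp [smul_ite, Finset.sum_ite_eq']
  -- find a unit coordinate of v
  have hunit : ∃ i1, IsUnit (B.repr ⟨v, hv⟩ i1) := by
    by_contra hno
    push_neg at hno
    have hdvd : ∀ i, ϖ ∣ B.repr ⟨v, hv⟩ i := by
      intro i
      rcases eq_or_ne (B.repr ⟨v, hv⟩ i) 0 with h | h
      · simp [h]
      · obtain ⟨m, hm⟩ := IsDiscreteValuationRing.associated_pow_irreducible h hϖ
        rcases Nat.eq_zero_or_pos m with rfl | hmpos
        · exact absurd (hm.symm.isUnit (by simp)) (hno i)
        · exact dvd_trans (dvd_pow_self ϖ hmpos.ne') hm.symm.dvd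
    choose t ht using hdvd
    set lΛ : Λ := ∑ i, t i • B i with hlΛ
    have hveq : (⟨v, hv⟩ : Λ) = ϖ • lΛ := by
      rw [hlΛ, Finset.smul_sum]
      conv_lhs => rw [← B.sum_repr ⟨v, hv⟩]
      refine Finset.sum_congr rfl fun i _ => ?_
      rw [ht i, mul_smul]
    exact hv2 (lΛ : Fin n → K) lΛ.2 (by
      rw [show v = ((⟨v, hv⟩ : Λ) : Fin n → K) from rfl, hveq]
      simp)
  obtain ⟨i1, hu⟩ := hunit
  set u := hu.unit with hu'
  set φ : (Fin n → K) →ₗ[K] (Fin n → K) :=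
    ((algebraMap R K ((u⁻¹ : Rˣ) : R)) • (bK.coord i1)).smulRight w with hφ
  have hφapp : ∀ y, φ y = (algebraMap R K ((u⁻¹ : Rˣ) : R) * bK.repr y i1) • w := by
    intro y
    simp [hφ, Module.Basis.coord_apply, smul_smul]
  refine ⟨LinearMap.toMatrix' φ, ?_, ?_⟩
  · intro y hy
    rw [← Matrix.toLin'_apply, Matrix.toLin'_toMatrix', hφapp y,
      hrepr y hy, ← map_mul, algebraMap_smul]
    exact Λ.smul_mem _ hw
  · rw [← Matrix.toLin'_apply, Matrix.toLin'_toMatrix', hφapp v,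
      hrepr v hv, ← map_mul]
    rw [show ((u⁻¹ : Rˣ) : R) * B.repr ⟨v, hv⟩ i1 = 1 by
      rw [← hu.unit_spec, ← hu', Units.inv_mul]]
    simp

noncomputable def scl (c : K) : (Fin n → K) →ₗ[R] (Fin n → K) :=
  (LinearMap.lsmul K (Fin n → K) c).restrictScalars R

lemma scl_apply (c : K) (x : Fin n → K) : scl (R := R) c x = c • x := rfl

lemma aux_stab_smul (M : Submodule R (Fin n → K)) {c : K} (hc : c ≠ 0) :
    stabRing R K (M.map (scl c)) = stabRing R K M := by
  ext X
  constructor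
  · intro hX m hm
    have h1 : c • m ∈ M.map (scl c) := ⟨m, hm, rfl⟩
    obtain ⟨m', hm', hm'eq⟩ := hX _ h1
    rw [scl_apply] at hm'eq
    rw [Matrix.mulVec_smul] at hm'eq
    rwa [smul_right_injective _ hc hm'eq.symm]
  · rintro hX y ⟨m, hm, rfl⟩
    rw [scl_apply, Matrix.mulVec_smul]
    exact ⟨X.mulVec m, hX m hm, rfl⟩

end Aux

/-- For full `R`-lattices `Λ, M` in `Kⁿ` (finitely generated `R`-submodules
spanning `Kⁿ` over `K`), the stabilizer rings `Δ_Λ` and `Δ_M` coincide if and only if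
`M = c • Λ` for some nonzero scalar `c ∈ K*`. -/
theorem stmt11 (n : ℕ)
    (Λ M : Submodule R (Fin n → K)) (hΛfg : Λ.FG) (hMfg : M.FG)
    (hΛspan : Submodule.span K (Λ : Set (Fin n → K)) = ⊤)
    (hMspan : Submodule.span K (M : Set (Fin n → K)) = ⊤) :
    stabRing R K Λ = stabRing R K M ↔
      ∃ c : K, c ≠ 0 ∧ (M : Set (Fin n → K)) = (fun v => c • v) '' (Λ : Set (Fin n → K)) := by
  classical
  constructor
  · intro hstab
    rcases Nat.eq_zero_or_pos n with hn | hn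
    · subst hn
      refine ⟨1, one_ne_zero, ?_⟩
      have h0 : ∀ x : Fin 0 → K, x = 0 := fun x => Subsingleton.elim _ _
      ext x
      simp only [Set.mem_image, SetLike.mem_coe]
      constructor
      · intro _; exact ⟨0, Λ.zero_mem, by rw [h0 x, smul_zero]⟩
      · intro _; rw [h0 x]; exact M.zero_mem
    -- main case
    haveI : Nonempty (Fin n) := ⟨⟨0, hn⟩⟩
    obtain ⟨ϖ, hϖ⟩ := IsDiscreteValuationRing.exists_irreducible R
    set p : K := algebraMap R K ϖ with hp
    have hp0 : p ≠ 0 := by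
      simpa [hp] using (IsFractionRing.injective R K).ne_iff.2 hϖ.ne_zero
    obtain ⟨s, hs0, hs⟩ := aux_denom Λ hΛfg
    obtain ⟨r0, hr00, hr0⟩ := aux_clear Λ M hMfg hΛspan
    set a : K := algebraMap R K r0 with ha
    have ha0 : a ≠ 0 := by
      simpa [ha] using (IsFractionRing.injective R K).ne_iff.2 hr00
    -- a nonzero element of M
    obtain ⟨m0, hm0M, hm00⟩ : ∃ m0 ∈ M, m0 ≠ (0 : Fin n → K) := by
      by_contra h
      push_neg at h
      have hMbot : (M : Set (Fin n → K)) ⊆ ((⊥ : Submodule K (Fin n → K)) : Set _) := by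
        intro x hx
        simpa using h x hx
      have h2 := Submodule.span_le.2 hMbot
      rw [hMspan] at h2
      exact top_ne_bot (le_antisymm h2 bot_le)
    obtain ⟨i0, hi0⟩ : ∃ i0, m0 i0 ≠ 0 := Function.ne_iff.1 hm00
    obtain ⟨pn, q, hqnzd, hm0i0⟩ := IsFractionRing.div_surjective (A := R) (m0 i0)
    have hq0 : (q : R) ≠ 0 := nonZeroDivisors.coe_ne_zero ⟨q, hqnzd⟩
    have hq0' : algebraMap R K q ≠ 0 := by
      simpa using (IsFractionRing.injective R K).ne_iff.2 hq0
    have hpn0 : pn ≠ 0 := by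
      rintro rfl
      apply hi0
      rw [← hm0i0]
      simp
    -- the exhaustion property
    set Q : ℕ → Prop := fun k => ∀ m ∈ M, (a / p ^ k) • m ∈ Λ with hQ
    have hQ0 : Q 0 := by
      intro m hm
      simpa [Algebra.smul_def] using hr0 m hm
    set T : R := s * r0 * pn with hT
    have hT0 : T ≠ 0 := mul_ne_zero (mul_ne_zero hs0 hr00) hpn0
    obtain ⟨N, hN⟩ := IsDiscreteValuationRing.associated_pow_irreducible hT0 hϖ
    have hbound : ∀ k, Q k → k ≤ N := by
      intro k hk
      have hy : (a / p ^ k) • m0 ∈ Λ := hk m0 hm0M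
      obtain ⟨r, hr⟩ := hs _ hy i0
      have key : algebraMap R K (r * q * ϖ ^ k) = algebraMap R K T := by
        rw [map_mul, map_mul, map_pow, ← hp, hT, map_mul, map_mul, ← ha]
        rw [hr]
        have : (((a / p ^ k) • m0) i0 : K) = a / p ^ k * m0 i0 := rfl
        rw [this, ← hm0i0]
        field_simp
      have keyR : r * q * ϖ ^ k = T := IsFractionRing.injective R K key
      have hdvd : ϖ ^ k ∣ T := ⟨r * q, by rw [← keyR]; ring⟩
      have hdvd2 : ϖ ^ k ∣ ϖ ^ N := hdvd.trans hN.dvd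
      exact (pow_dvd_pow_iff hϖ.ne_zero hϖ.not_isUnit).1 hdvd2
    set kk := Nat.findGreatest Q N with hkk
    have hQk : Q kk := Nat.findGreatest_spec (Nat.zero_le N) hQ0
    have hQsucc : ¬ Q (kk + 1) := by
      intro h
      rcases le_or_gt (kk + 1) N with hle | hlt
      · exact Nat.findGreatest_is_greatest (Nat.lt_succ_self kk) hle h
      · exact absurd (hbound _ h) (by omega)
    set c : K := a / p ^ kk with hc
    have hc0 : c ≠ 0 := div_ne_zero ha0 (pow_ne_zero _ hp0)
    -- the element violating divisibility
    obtain ⟨m1, hm1M, hm1⟩ : ∃ m1 ∈ M, (a / p ^ (kk + 1)) • m1 ∉ Λ := by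
      by_contra h
      push_neg at h
      exact hQsucc h
    set v : Fin n → K := c • m1 with hv
    have hvΛ : v ∈ Λ := hQk m1 hm1M
    have hv2 : ∀ l ∈ Λ, v ≠ ϖ • l := by
      intro l hl hveq
      apply hm1
      have : (a / p ^ (kk + 1)) • m1 = p⁻¹ • v := by
        rw [hv, smul_smul, hc]
        congr 1
        rw [pow_succ, div_mul_eq_div_div, div_eq_mul_inv, mul_comm]
      rw [this, hveq]
      have : (p⁻¹ • (ϖ • l) : Fin n → K) = l := by
        rw [← algebraMap_smul K ϖ l, ← hp, smul_smul, inv_mul_cancel₀ hp0, one_smul]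
      rw [this]
      exact hl
    -- M' = c • M
    set M' := M.map (scl (R := R) c) with hM'
    have hstab' : stabRing R K Λ = stabRing R K M' :=
      hstab.trans (aux_stab_smul M hc0).symm
    have hM'le : M' ≤ Λ := by
      rintro _ ⟨m, hm, rfl⟩
      exact hQk m hm
    have hvM' : v ∈ M' := ⟨m1, hm1M, rfl⟩
    have hleM' : Λ ≤ M' := by
      intro w hw
      obtain ⟨X, hXΛ, hXv⟩ := aux_key Λ hΛfg hΛspan hϖ hvΛ hv2 hw
      rw [hstab'] at hXΛ
      rw [← hXv]
      exact hXΛ v hvM'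
    have hM'Λ : M' = Λ := le_antisymm hM'le hleM'
    refine ⟨c⁻¹, inv_ne_zero hc0, ?_⟩
    have hsets : (Λ : Set (Fin n → K)) = (fun v => c • v) '' (M : Set (Fin n → K)) := by
      rw [← hM'Λ, hM', Submodule.map_coe]
      rfl
    rw [hsets, Set.image_image]
    have : ∀ x : Fin n → K, c⁻¹ • c • x = x := fun x => by
      rw [smul_smul, inv_mul_cancel₀ hc0, one_smul]
    simp only [this, Set.image_id']
  · rintro ⟨c, hc0, hMc⟩
    have hMmap : M = Λ.map (scl (R := R) c) := by
      apply SetLike.coe_injective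
      rw [Submodule.map_coe, hMc]
      rfl
    rw [hMmap, aux_stab_smul Λ hc0]
end
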